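/- Let G = max over n ∈ {0,…,N−1} and (i,a,j) ∈ S×A×S of |g_n(i,a,j)|. Then for every r ≥ 1 and every Q ∈ ℝ^d, ‖h_r(Q) − h_∞(Q)‖ ≤ G/r, where h_r(Q) = h(rQ)/r. In particular h_r converges to h_∞ uniformly on ℝ^d (hence uniformly on compact sets) as r → ∞. -/
import Mathlib

open Finset

noncomputable section

/-- The finite-horizon Q-learning vector field `h`. -/
def hvec {S A : Type*} [Fintype S] [Fintype A] [Nonempty A] (N : ℕ)
    (p g : ℕ → S → A → S → ℝ)
    (Q : Fin (N + 1) × S × A → ℝ) : Fin (N + 1) × S × A → ℝ :=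
  fun x =>
    if h : (x.1 : ℕ) < N then
      (∑ j, p x.1 x.2.1 x.2.2 j *
        (g x.1 x.2.1 x.2.2 j + ⨅ b : A, Q (⟨(x.1 : ℕ) + 1, by omega⟩, j, b)))
        - Q x
    else 0

/-- The limiting finite-horizon Q-learning vector field `h_∞`. -/
def hinf {S A : Type*} [Fintype S] [Fintype A] [Nonempty A] (N : ℕ)
    (p : ℕ → S → A → S → ℝ)
    (Q : Fin (N + 1) × S × A → ℝ) : Fin (N + 1) × S × A → ℝ :=
  fun x =>
    if h : (x.1 : ℕ) < N then
      (∑ j, p x.1 x.2.1 x.2.2 j * ⨅ b : A, Q (⟨(x.1 : ℕ) + 1, by omega⟩, j, b))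
        - Q x
    else 0

/-- with `G = max_{n < N, i, a, j} |g_n(i,a,j)|`, the rescaled fields
satisfy `‖h_r(Q) − h_∞(Q)‖ ≤ G/r` for all `r ≥ 1` and all `Q`; in particular
`h_r → h_∞` uniformly on `ℝ^d` as `r → ∞`. -/
theorem hvec_rescaled_tendsto_hinf {S A : Type*} [Fintype S] [Nonempty S]
    [Fintype A] [Nonempty A]
    (N : ℕ) (hN : 1 ≤ N)
    (p g : ℕ → S → A → S → ℝ) (gN : S → ℝ)
    (hp0 : ∀ n < N, ∀ i a j, 0 ≤ p n i a j)
    (hp1 : ∀ n < N, ∀ i a, ∑ j, p n i a j = 1)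
    (G : ℝ)
    (hG : haveI : Nonempty (Fin N) := Fin.pos_iff_nonempty.mp (by omega)
      G = ⨆ x : Fin N × S × A × S, |g x.1 x.2.1 x.2.2.1 x.2.2.2|) :
    (∀ r : ℝ, 1 ≤ r → ∀ Q : Fin (N + 1) × S × A → ℝ,
        ‖r⁻¹ • hvec N p g (r • Q) - hinf N p Q‖ ≤ G / r) ∧
      TendstoUniformly (fun (r : ℝ) (Q : Fin (N + 1) × S × A → ℝ) =>
          r⁻¹ • hvec N p g (r • Q))
        (hinf N p) Filter.atTop := by
  haveI hNe : Nonempty (Fin N) := Fin.pos_iff_nonempty.mp (by omega)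
  have hGle : ∀ n < N, ∀ i a j, |g n i a j| ≤ G := by
    intro n hn i a j
    rw [hG]
    exact le_ciSup (f := fun x : Fin N × S × A × S => |g x.1 x.2.1 x.2.2.1 x.2.2.2|)
      (Finite.bddAbove_range _) (⟨n, hn⟩, i, a, j)
  have hGnn : 0 ≤ G := le_trans (abs_nonneg _)
    (hGle 0 (by omega) Classical.ofNonempty Classical.ofNonempty Classical.ofNonempty)
  have key : ∀ r : ℝ, 1 ≤ r → ∀ Q : Fin (N + 1) × S × A → ℝ,
      ‖r⁻¹ • hvec N p g (r • Q) - hinf N p Q‖ ≤ G / r := by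
    intro r hr Q
    have hr0 : (0 : ℝ) < r := lt_of_lt_of_le one_pos hr
    rw [pi_norm_le_iff_of_nonneg (by positivity)]
    rintro ⟨n, i, a⟩
    simp only [Pi.sub_apply, Pi.smul_apply, smul_eq_mul, hvec, hinf]
    by_cases hn : (n : ℕ) < N
    · simp only [dif_pos hn]
      have hinfr : ∀ j : S,
          (⨅ b : A, r * Q (⟨(n : ℕ) + 1, by omega⟩, j, b))
            = r * ⨅ b : A, Q (⟨(n : ℕ) + 1, by omega⟩, j, b) := by
        intro j
        rw [Real.mul_iInf_of_nonneg hr0.le]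
      simp only [hinfr]
      have expand :
          (∑ j, p (n : ℕ) i a j *
              (g (n : ℕ) i a j + r * ⨅ b : A, Q (⟨(n : ℕ) + 1, by omega⟩, j, b)))
            = (∑ j, p (n : ℕ) i a j * g (n : ℕ) i a j)
              + r * ∑ j, p (n : ℕ) i a j * ⨅ b : A, Q (⟨(n : ℕ) + 1, by omega⟩, j, b) := by
        rw [Finset.mul_sum, ← Finset.sum_add_distrib]
        congr 1; ext j; ring
      rw [expand]
      have heq : r⁻¹ * ((∑ j, p (n : ℕ) i a j * g (n : ℕ) i a j)
            + r * (∑ j, p (n : ℕ) i a j * ⨅ b : A, Q (⟨(n : ℕ) + 1, by omega⟩, j, b))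
            - r * Q (n, i, a))
          - ((∑ j, p (n : ℕ) i a j * ⨅ b : A, Q (⟨(n : ℕ) + 1, by omega⟩, j, b))
            - Q (n, i, a))
          = r⁻¹ * ∑ j, p (n : ℕ) i a j * g (n : ℕ) i a j := by
        field_simp
        ring
      rw [heq, Real.norm_eq_abs, abs_mul, abs_of_pos (inv_pos.mpr hr0), div_eq_inv_mul]
      refine mul_le_mul_of_nonneg_left ?_ (by positivity)
      calc |∑ j, p (n : ℕ) i a j * g (n : ℕ) i a j|
          ≤ ∑ j, |p (n : ℕ) i a j * g (n : ℕ) i a j| := Finset.abs_sum_le_sum_abs _ _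
        _ ≤ ∑ j, p (n : ℕ) i a j * G := by
            refine Finset.sum_le_sum fun j _ => ?_
            rw [abs_mul, abs_of_nonneg (hp0 _ hn i a j)]
            exact mul_le_mul_of_nonneg_left (hGle _ hn i a j) (hp0 _ hn i a j)
        _ = G := by rw [← Finset.sum_mul, hp1 _ hn i a, one_mul]
    · simp only [dif_neg hn]
      simp [div_nonneg hGnn hr0.le]
  refine ⟨key, ?_⟩
  rw [Metric.tendstoUniformly_iff]
  intro ε hε
  filter_upwards [Filter.eventually_ge_atTop (max 1 (G / ε + 1))] with r hr Q
  have hr1 : 1 ≤ r := le_trans (le_max_left _ _) hr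
  have hr0 : (0 : ℝ) < r := lt_of_lt_of_le one_pos hr1
  have hdist : dist (hinf N p Q) (r⁻¹ • hvec N p g (r • Q)) ≤ G / r := by
    rw [dist_comm, dist_eq_norm]
    exact key r hr1 Q
  refine lt_of_le_of_lt hdist ?_
  rw [div_lt_iff₀ hr0]
  have : G / ε + 1 ≤ r := le_trans (le_max_right _ _) hr
  nlinarith [div_nonneg hGnn hε.le, (div_le_iff₀ hε).mp (le_refl (G / ε))]
end
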